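/- With the coefficients a_ν^{(n)} as above, for every n ≥ 1 and fixed x_0 ∈ R: D_r(n){sin(x_0 r)} = Σ_{ν=1}^n a_ν^{(n)} (x_0^ν / r^{2n-ν}) sin(x_0 r + νπ/2), and D^r(n){sin(x_0 r)} = Σ_{ν=0}^n a_{ν+1}^{(n+1)} (x_0^ν / r^{2n-ν}) sin(x_0 r + νπ/2), as functions of r ∈ (0,∞). -/

import Mathlib

/-- `Dr n f = ((1/r) d/dr)^n f`, the `n`-fold composition of `f ↦ (1/r) f'`. -/
noncomputable def Dr : ℕ → (ℝ → ℝ) → (ℝ → ℝ)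
  | 0, f => f
  | n + 1, f => fun r => (1 / r) * deriv (Dr n f) r

/-- `Dsup n`, i.e. `D^r(n)`: `D^r(0){f} = f`, `D^r(n){f} = d/dr (D^r(n-1){f} / r)`. -/
noncomputable def Dsup : ℕ → (ℝ → ℝ) → (ℝ → ℝ)
  | 0, f => f
  | n + 1, f => fun r => deriv (fun s => Dsup n f s / s) r

open scoped Nat Real


private lemma sin_shift (x₀ r : ℝ) (ν : ℕ) :
    Real.sin (x₀ * r + (ν + 1 : ℕ) * π / 2) = Real.cos (x₀ * r + ν * π / 2) := by
  push_cast
  rw [show x₀ * r + (↑ν + 1) * π / 2 = (x₀ * r + ↑ν * π / 2) + π / 2 by ring,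
    Real.sin_add_pi_div_two]

private lemma hasDerivAt_sin_aff (x₀ θ r : ℝ) :
    HasDerivAt (fun s : ℝ => Real.sin (x₀ * s + θ)) (x₀ * Real.cos (x₀ * r + θ)) r := by
  simpa [mul_comm, Function.comp_def] using
    (Real.hasDerivAt_sin (x₀ * r + θ)).comp r (((hasDerivAt_id r).const_mul x₀).add_const θ)

private lemma hasDerivAt_term (A X x₀ θ : ℝ) {k : ℕ} (hk : 1 ≤ k) {r : ℝ} (hr : r ≠ 0) :
    HasDerivAt (fun s : ℝ => A * (X / s ^ k) * Real.sin (x₀ * s + θ))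
      (-(k : ℝ) * A * (X / r ^ (k + 1)) * Real.sin (x₀ * r + θ)
        + A * (X * x₀ / r ^ k) * Real.cos (x₀ * r + θ)) r := by
  obtain ⟨j, rfl⟩ : ∃ j, k = j + 1 := ⟨k - 1, by omega⟩
  have h1 := (hasDerivAt_pow (j + 1) r).fun_inv (pow_ne_zero _ hr)
  have h2 := (h1.const_mul (A * X)).fun_mul (hasDerivAt_sin_aff x₀ θ r)
  have hfun : (fun s : ℝ => A * (X / s ^ (j + 1)) * Real.sin (x₀ * s + θ))
      = fun s : ℝ => A * X * (s ^ (j + 1))⁻¹ * Real.sin (x₀ * s + θ) := by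
    funext s; ring
  rw [hfun]
  refine h2.congr_deriv ?_
  have : ((j : ℝ) + 1) ≠ 0 := by positivity
  push_cast
  field_simp
  ring

private lemma a_one_step (a : ℕ → ℕ → ℝ)
    (ha1 : ∀ n, 1 ≤ n → a n 1 = (-1 : ℝ) ^ (n + 1) * (2 * n - 3)‼)
    (n : ℕ) (hn : 1 ≤ n) :
    a (n + 1) 1 = -(((2 * n - 1 : ℕ)) : ℝ) * a n 1 := by
  match n, hn with
  | 1, _ =>
    rw [ha1 2 (by norm_num), ha1 1 (by norm_num)]
    norm_num [Nat.doubleFactorial]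
  | (m + 2), _ =>
    rw [ha1 (m + 3) (by omega), ha1 (m + 2) (by omega)]
    have e1 : 2 * (m + 3) - 3 = (2 * m + 1) + 2 := by omega
    have e2 : 2 * (m + 2) - 3 = 2 * m + 1 := by omega
    have e3 : 2 * (m + 2) - 1 = 2 * m + 3 := by omega
    rw [e1, e2, e3, Nat.doubleFactorial_add_two]
    push_cast
    ring

private lemma sum_step (t : ℕ) (b c w u : ℕ → ℝ)
    (h0 : c 0 = w 0 * b 0)
    (htop : c (t + 1) = b t)
    (hmid : ∀ ν, 1 ≤ ν → ν ≤ t → c ν = w ν * b ν + b (ν - 1)) :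
    ∑ ν ∈ Finset.range (t + 1), (w ν * b ν * u ν + b ν * u (ν + 1))
      = ∑ ν ∈ Finset.range (t + 2), c ν * u ν := by
  rw [Finset.sum_add_distrib]
  rw [Finset.sum_range_succ' (fun ν => w ν * b ν * u ν) t]
  rw [Finset.sum_range_succ (fun ν => b ν * u (ν + 1)) t]
  rw [show t + 2 = (t + 1) + 1 from rfl,
    Finset.sum_range_succ (fun ν => c ν * u ν) (t + 1),
    Finset.sum_range_succ' (fun ν => c ν * u ν) t]
  have hm : ∀ i ∈ Finset.range t,
      c (i + 1) * u (i + 1) = w (i + 1) * b (i + 1) * u (i + 1) + b i * u (i + 1) := by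
    intro i hi
    rw [Finset.mem_range] at hi
    rw [hmid (i + 1) (by omega) (by omega), Nat.add_sub_cancel]
    ring
  rw [Finset.sum_congr rfl hm, Finset.sum_add_distrib, h0, htop]
  ring

private lemma hasDerivAt_sin_mul (x₀ r : ℝ) :
    HasDerivAt (fun s : ℝ => Real.sin (x₀ * s)) (x₀ * Real.cos (x₀ * r)) r := by
  simpa [mul_comm, Function.comp_def] using
    (Real.hasDerivAt_sin (x₀ * r)).comp r ((hasDerivAt_id r).const_mul x₀)

private lemma icc_to_range (k : ℕ) (f : ℕ → ℝ) :
    ∑ ν ∈ Finset.Icc 1 k, f ν = ∑ i ∈ Finset.range k, f (1 + i) := by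
  rw [← Finset.Ico_add_one_right_eq_Icc, Finset.sum_Ico_eq_sum_range]
  simp

private lemma dr_sin (a : ℕ → ℕ → ℝ)
    (ha1 : ∀ n, 1 ≤ n → a n 1 = (-1 : ℝ) ^ (n + 1) * (2 * n - 3)‼)
    (hann : ∀ n, 1 ≤ n → a n n = 1)
    (harec : ∀ n ν, 2 ≤ ν → ν ≤ n →
      a (n + 1) ν = -(2 * (n : ℝ) - ν) * a n ν + a n (ν - 1))
    (x₀ : ℝ) :
    ∀ n, 1 ≤ n → ∀ r ∈ Set.Ioi (0 : ℝ),
      Dr n (fun s => Real.sin (x₀ * s)) r =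
        ∑ ν ∈ Finset.Icc 1 n,
          a n ν * (x₀ ^ ν / r ^ (2 * n - ν)) * Real.sin (x₀ * r + ν * π / 2) := by
  intro n hn
  induction n, hn using Nat.le_induction with
  | base =>
    intro r hr
    have hr0 : r ≠ 0 := ne_of_gt hr
    simp only [Dr]
    rw [(hasDerivAt_sin_mul x₀ r).deriv, Finset.Icc_self, Finset.sum_singleton,
      hann 1 le_rfl]
    have h1 : Real.sin (x₀ * r + (1 : ℕ) * π / 2) = Real.cos (x₀ * r) := by
      have := sin_shift x₀ r 0
      norm_num at this ⊢
      rw [this]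
    rw [h1]
    norm_num
    ring
  | succ n hn ih =>
    intro r hr
    have hr0 : r ≠ 0 := ne_of_gt hr
    simp only [Dr]
    have hev : Dr n (fun s => Real.sin (x₀ * s)) =ᶠ[nhds r]
        (fun s => ∑ ν ∈ Finset.Icc 1 n,
          a n ν * (x₀ ^ ν / s ^ (2 * n - ν)) * Real.sin (x₀ * s + ν * π / 2)) := by
      filter_upwards [isOpen_Ioi.mem_nhds hr] with s hs
      exact ih s hs
    rw [hev.deriv_eq]
    have key : HasDerivAt
        (fun s => ∑ ν ∈ Finset.Icc 1 n,
          a n ν * (x₀ ^ ν / s ^ (2 * n - ν)) * Real.sin (x₀ * s + ν * π / 2))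
        (∑ ν ∈ Finset.Icc 1 n,
          (-((2 * n - ν : ℕ) : ℝ) * a n ν * (x₀ ^ ν / r ^ ((2 * n - ν) + 1)) *
              Real.sin (x₀ * r + ν * π / 2)
            + a n ν * (x₀ ^ ν * x₀ / r ^ (2 * n - ν)) * Real.cos (x₀ * r + ν * π / 2))) r := by
      apply HasDerivAt.fun_sum
      intro ν hν
      rw [Finset.mem_Icc] at hν
      exact hasDerivAt_term _ _ _ _ (by omega) hr0
    rw [key.deriv, Finset.mul_sum]
    obtain ⟨t, rfl⟩ : ∃ t, n = t + 1 := ⟨n - 1, by omega⟩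
    rw [icc_to_range, icc_to_range]
    rw [show t + 1 + 1 = t + 2 from rfl]
    have hmain := sum_step t
      (fun i => a (t + 1) (1 + i)) (fun i => a (t + 2) (1 + i))
      (fun i => -((2 * (t + 1) - (1 + i) : ℕ) : ℝ))
      (fun i => x₀ ^ (1 + i) / r ^ (2 * (t + 1) - (1 + i) + 2) *
        Real.sin (x₀ * r + (1 + i : ℕ) * π / 2))
      (by simpa using a_one_step a ha1 (t + 1) (by omega))
      (by
        show a (t + 2) (1 + (t + 1)) = a (t + 1) (1 + t)
        rw [show 1 + (t + 1) = t + 2 from by omega, show 1 + t = t + 1 from by omega,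
          hann (t + 2) (by omega), hann (t + 1) (by omega)])
      (by
        intro ν h1 h2
        show a (t + 2) (1 + ν) = -((2 * (t + 1) - (1 + ν) : ℕ) : ℝ) * a (t + 1) (1 + ν)
          + a (t + 1) (1 + (ν - 1))
        have h3 := harec (t + 1) (1 + ν) (by omega) (by omega)
        rw [show 1 + ν - 1 = ν from by omega] at h3
        rw [show 1 + (ν - 1) = ν from by omega]
        rw [h3]
        rw [Nat.cast_sub (by omega : 1 + ν ≤ 2 * (t + 1))]
        push_cast
        ring)
    calc ∑ i ∈ Finset.range (t + 1), (1 / r) *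
          (-((2 * (t + 1) - (1 + i) : ℕ) : ℝ) * a (t + 1) (1 + i) *
              (x₀ ^ (1 + i) / r ^ ((2 * (t + 1) - (1 + i)) + 1)) *
              Real.sin (x₀ * r + (1 + i : ℕ) * π / 2)
            + a (t + 1) (1 + i) * (x₀ ^ (1 + i) * x₀ / r ^ (2 * (t + 1) - (1 + i))) *
              Real.cos (x₀ * r + (1 + i : ℕ) * π / 2))
        = ∑ i ∈ Finset.range (t + 1),
            (-((2 * (t + 1) - (1 + i) : ℕ) : ℝ) * a (t + 1) (1 + i) *
              (x₀ ^ (1 + i) / r ^ (2 * (t + 1) - (1 + i) + 2) *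
                Real.sin (x₀ * r + (1 + i : ℕ) * π / 2))
            + a (t + 1) (1 + i) *
              (x₀ ^ (1 + (i + 1)) / r ^ (2 * (t + 1) - (1 + (i + 1)) + 2) *
                Real.sin (x₀ * r + (1 + (i + 1) : ℕ) * π / 2))) := by
          apply Finset.sum_congr rfl
          intro i hi
          rw [Finset.mem_range] at hi
          rw [show 1 + (i + 1) = (1 + i) + 1 from by omega]
          rw [sin_shift x₀ r (1 + i)]
          rw [show 2 * (t + 1) - (1 + i + 1) + 2 = (2 * (t + 1) - (1 + i)) + 1 from by omega]
          rw [show 2 * (t + 1) - (1 + i) + 2 = (2 * (t + 1) - (1 + i)) + 2 from rfl]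
          field_simp
          ring
      _ = ∑ ν ∈ Finset.range (t + 2), a (t + 2) (1 + ν) *
            (x₀ ^ (1 + ν) / r ^ (2 * (t + 1) - (1 + ν) + 2) *
              Real.sin (x₀ * r + (1 + ν : ℕ) * π / 2)) := hmain
      _ = ∑ i ∈ Finset.range (t + 2), a (t + 1 + 1) (1 + i) *
            (x₀ ^ (1 + i) / r ^ (2 * (t + 1 + 1) - (1 + i))) *
            Real.sin (x₀ * r + (1 + i : ℕ) * π / 2) := by
          apply Finset.sum_congr rfl
          intro i hi
          rw [Finset.mem_range] at hi
          rw [show 2 * (t + 1) - (1 + i) + 2 = 2 * (t + 1 + 1) - (1 + i) from by omega]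
          ring

private lemma dsup_sin (a : ℕ → ℕ → ℝ)
    (ha1 : ∀ n, 1 ≤ n → a n 1 = (-1 : ℝ) ^ (n + 1) * (2 * n - 3)‼)
    (hann : ∀ n, 1 ≤ n → a n n = 1)
    (harec : ∀ n ν, 2 ≤ ν → ν ≤ n →
      a (n + 1) ν = -(2 * (n : ℝ) - ν) * a n ν + a n (ν - 1))
    (x₀ : ℝ) :
    ∀ n, 1 ≤ n → ∀ r ∈ Set.Ioi (0 : ℝ),
      Dsup n (fun s => Real.sin (x₀ * s)) r =
        ∑ ν ∈ Finset.range (n + 1),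
          a (n + 1) (ν + 1) * (x₀ ^ ν / r ^ (2 * n - ν)) * Real.sin (x₀ * r + ν * π / 2) := by
  intro n hn
  induction n, hn using Nat.le_induction with
  | base =>
    intro r hr
    have hr0 : r ≠ 0 := ne_of_gt hr
    simp only [Dsup]
    have hid : HasDerivAt (fun s : ℝ => s) 1 r := hasDerivAt_id r
    have hd := (hasDerivAt_sin_mul x₀ r).fun_div hid hr0
    rw [hd.deriv]
    rw [Finset.sum_range_succ, Finset.sum_range_succ, Finset.sum_range_zero]
    have h21 : a 2 1 = -1 := by
      have := a_one_step a ha1 1 le_rfl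
      rw [hann 1 le_rfl] at this
      norm_num at this
      exact this
    have h22 : a 2 2 = 1 := hann 2 (by norm_num)
    have hs1 : Real.sin (x₀ * r + (1 : ℕ) * π / 2) = Real.cos (x₀ * r) := by
      have := sin_shift x₀ r 0
      norm_num at this ⊢
      rw [this]
    rw [hs1, h21, h22]
    norm_num
    field_simp
    ring
  | succ n hn ih =>
    intro r hr
    have hr0 : r ≠ 0 := ne_of_gt hr
    simp only [Dsup]
    have hev : (fun s => Dsup n (fun s => Real.sin (x₀ * s)) s / s) =ᶠ[nhds r]
        (fun s => ∑ ν ∈ Finset.range (n + 1),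
          a (n + 1) (ν + 1) * (x₀ ^ ν / s ^ (2 * n - ν + 1)) * Real.sin (x₀ * s + ν * π / 2)) := by
      filter_upwards [isOpen_Ioi.mem_nhds hr] with s hs
      have hs0 : s ≠ 0 := ne_of_gt hs
      rw [ih s hs, Finset.sum_div]
      apply Finset.sum_congr rfl
      intro ν hν
      rw [Finset.mem_range] at hν
      rw [pow_succ]
      field_simp
    rw [hev.deriv_eq]
    have key : HasDerivAt
        (fun s => ∑ ν ∈ Finset.range (n + 1),
          a (n + 1) (ν + 1) * (x₀ ^ ν / s ^ (2 * n - ν + 1)) * Real.sin (x₀ * s + ν * π / 2))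
        (∑ ν ∈ Finset.range (n + 1),
          (-((2 * n - ν + 1 : ℕ) : ℝ) * a (n + 1) (ν + 1) *
              (x₀ ^ ν / r ^ ((2 * n - ν + 1) + 1)) * Real.sin (x₀ * r + ν * π / 2)
            + a (n + 1) (ν + 1) * (x₀ ^ ν * x₀ / r ^ (2 * n - ν + 1)) *
              Real.cos (x₀ * r + ν * π / 2))) r := by
      apply HasDerivAt.fun_sum
      intro ν hν
      exact hasDerivAt_term _ _ _ _ (by omega) hr0
    rw [key.deriv]
    have hmain := sum_step n
      (fun ν => a (n + 1) (ν + 1)) (fun ν => a (n + 2) (ν + 1))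
      (fun ν => -((2 * n - ν + 1 : ℕ) : ℝ))
      (fun ν => x₀ ^ ν / r ^ (2 * n - ν + 2) * Real.sin (x₀ * r + (ν : ℕ) * π / 2))
      (by
        show a (n + 2) 1 = -((2 * n + 1 : ℕ) : ℝ) * a (n + 1) 1
        rw [show (2 * n + 1 : ℕ) = 2 * (n + 1) - 1 from by omega]
        exact a_one_step a ha1 (n + 1) (by omega))
      (by
        show a (n + 2) (n + 2) = a (n + 1) (n + 1)
        rw [hann (n + 2) (by omega), hann (n + 1) (by omega)])
      (by
        intro ν h1 h2
        show a (n + 2) (ν + 1) = -((2 * n - ν + 1 : ℕ) : ℝ) * a (n + 1) (ν + 1)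
          + a (n + 1) (ν - 1 + 1)
        have h3 := harec (n + 1) (ν + 1) (by omega) (by omega)
        rw [Nat.add_sub_cancel] at h3
        rw [show ν - 1 + 1 = ν from by omega, h3]
        push_cast [Nat.cast_sub (show ν ≤ 2 * n from by omega)]
        ring)
    calc ∑ ν ∈ Finset.range (n + 1),
          (-((2 * n - ν + 1 : ℕ) : ℝ) * a (n + 1) (ν + 1) *
              (x₀ ^ ν / r ^ ((2 * n - ν + 1) + 1)) * Real.sin (x₀ * r + ν * π / 2)
            + a (n + 1) (ν + 1) * (x₀ ^ ν * x₀ / r ^ (2 * n - ν + 1)) *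
              Real.cos (x₀ * r + ν * π / 2))
        = ∑ ν ∈ Finset.range (n + 1),
            (-((2 * n - ν + 1 : ℕ) : ℝ) * a (n + 1) (ν + 1) *
              (x₀ ^ ν / r ^ (2 * n - ν + 2) * Real.sin (x₀ * r + (ν : ℕ) * π / 2))
            + a (n + 1) (ν + 1) *
              (x₀ ^ (ν + 1) / r ^ (2 * n - (ν + 1) + 2) *
                Real.sin (x₀ * r + ((ν + 1 : ℕ) : ℝ) * π / 2))) := by
          apply Finset.sum_congr rfl
          intro ν hν
          rw [Finset.mem_range] at hν
          rw [sin_shift x₀ r ν]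
          rw [show 2 * n - (ν + 1) + 2 = 2 * n - ν + 1 from by omega]
          rw [show 2 * n - ν + 2 = (2 * n - ν + 1) + 1 from by omega]
          field_simp
          ring
      _ = ∑ ν ∈ Finset.range (n + 2), a (n + 2) (ν + 1) *
            (x₀ ^ ν / r ^ (2 * n - ν + 2) * Real.sin (x₀ * r + (ν : ℕ) * π / 2)) := hmain
      _ = ∑ ν ∈ Finset.range (n + 1 + 1), a (n + 1 + 1) (ν + 1) *
            (x₀ ^ ν / r ^ (2 * (n + 1) - ν)) * Real.sin (x₀ * r + ν * π / 2) := by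
          apply Finset.sum_congr rfl
          intro ν hν
          rw [Finset.mem_range] at hν
          rw [show 2 * n - ν + 2 = 2 * (n + 1) - ν from by omega]
          ring

/-- with the coefficients `a n ν` as in Statement 13, for every `n ≥ 1`
and fixed `x₀ ∈ ℝ`, on `(0,∞)`:
`D_r(n){sin(x₀ r)} = ∑_{ν=1}^n a n ν (x₀^ν / r^{2n-ν}) sin(x₀ r + νπ/2)` and
`D^r(n){sin(x₀ r)} = ∑_{ν=0}^n a (n+1) (ν+1) (x₀^ν / r^{2n-ν}) sin(x₀ r + νπ/2)`. -/
theorem Dr_Dsup_sin (a : ℕ → ℕ → ℝ)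
    (ha1 : ∀ n, 1 ≤ n → a n 1 = (-1 : ℝ) ^ (n + 1) * (2 * n - 3)‼)
    (hann : ∀ n, 1 ≤ n → a n n = 1)
    (harec : ∀ n ν, 2 ≤ ν → ν ≤ n →
      a (n + 1) ν = -(2 * (n : ℝ) - ν) * a n ν + a n (ν - 1))
    (n : ℕ) (hn : 1 ≤ n) (x₀ : ℝ) :
    ∀ r ∈ Set.Ioi (0 : ℝ),
      Dr n (fun s => Real.sin (x₀ * s)) r =
        ∑ ν ∈ Finset.Icc 1 n,
          a n ν * (x₀ ^ ν / r ^ (2 * n - ν)) * Real.sin (x₀ * r + ν * π / 2) ∧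
      Dsup n (fun s => Real.sin (x₀ * s)) r =
        ∑ ν ∈ Finset.range (n + 1),
          a (n + 1) (ν + 1) * (x₀ ^ ν / r ^ (2 * n - ν)) * Real.sin (x₀ * r + ν * π / 2) := by
  intro r hr
  exact ⟨dr_sin a ha1 hann harec x₀ n hn r hr, dsup_sin a ha1 hann harec x₀ n hn r hr⟩
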